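/- Let V be a finite-dimensional real inner product space, let M ∈ ℕ, and let X_0 ⊆ X_1 ⊆ ⋯ ⊆ X_M be a nested family of subspaces of V with orthogonal projections Q_0, Q_1, …, Q_M (set Q_{−1} := 0 and D_k := Q_k − Q_{k−1} for 0 ≤ k ≤ M). Let G_0, …, G_M : V → V be linear maps such that, for each m: (a) G_m is self-adjoint (⟨G_m v, w⟩ = ⟨v, G_m w⟩ for all v, w), (b) G_m is positive semidefinite (⟨G_m v, v⟩ ≥ 0 for all v), and (c) the range of G_m is contained in X_m. Let δ ∈ (0,1) and C₀ > 0 be such that the strengthened Cauchy–Schwarz inequality ⟨G_m u, w⟩ ≤ C₀ δ^{m−k} ‖u‖ ‖w‖ holds for all 0 ≤ k ≤ m ≤ M and all u, w ∈ X_k. Then ∑_{m=0}^{M} ⟨G_m v, v⟩ ≤ (C₀ / (1 − δ^{1/2})²) · ‖v‖² for all v ∈ V. -/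

import Mathlib

open scoped RealInnerProductSpace
open Finset

section Aux

variable {V : Type*} [NormedAddCommGroup V] [InnerProductSpace ℝ V]
  [FiniteDimensional ℝ V]

/-- Projection identity: `⟪P_K v, w⟫ = ⟪v, w⟫` for `w ∈ K`. -/
lemma scs_proj_inner (K : Submodule ℝ V) (v w : V) (hw : w ∈ K) :
    ⟪(Submodule.orthogonalProjection K v : V), w⟫ = ⟪v, w⟫ := by
  have h : ⟪v - (Submodule.orthogonalProjection K v : V), w⟫ = 0 :=
    Submodule.starProjection_inner_eq_zero v w hw
  rw [inner_sub_left] at h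
  linarith

/-- Norm bound for the orthogonal projection. -/
lemma scs_proj_norm_le (K : Submodule ℝ V) (v : V) :
    ‖(Submodule.orthogonalProjection K v : V)‖ ≤ ‖v‖ := by
  set p : V := (Submodule.orthogonalProjection K v : V) with hp
  have h1 : ⟪p, p⟫ = ⟪v, p⟫ := scs_proj_inner K v p (Submodule.coe_mem _)
  have h2 : ⟪v, p⟫ ≤ ‖v‖ * ‖p‖ := real_inner_le_norm v p
  have h3 : ⟪p, p⟫ = ‖p‖ ^ 2 := real_inner_self_eq_norm_sq p
  nlinarith [norm_nonneg p, norm_nonneg v]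

/-- Cauchy–Schwarz for a positive semidefinite symmetric operator. -/
lemma scs_psd_cs (g : V →ₗ[ℝ] V) (hsym : ∀ x y : V, ⟪g x, y⟫ = ⟪x, g y⟫)
    (hpos : ∀ x : V, 0 ≤ ⟪g x, x⟫) (x y : V) :
    ⟪g x, y⟫ ≤ Real.sqrt ⟪g x, x⟫ * Real.sqrt ⟪g y, y⟫ := by
  have hBsymm : ⟪g x, y⟫ = ⟪g y, x⟫ := by
    rw [hsym x y, real_inner_comm]
  have hq : ∀ t : ℝ, 0 ≤ ⟪g y, y⟫ * (t * t) + (-(2 * ⟪g x, y⟫)) * t + ⟪g x, x⟫ := by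
    intro t
    have h0 := hpos (x - t • y)
    have : ⟪g (x - t • y), x - t • y⟫ =
        ⟪g x, x⟫ - t * ⟪g x, y⟫ - t * ⟪g y, x⟫ + t * t * ⟪g y, y⟫ := by
      rw [map_sub, map_smul]
      rw [inner_sub_left, inner_sub_right, inner_sub_right]
      rw [inner_smul_left, inner_smul_right, inner_smul_left, inner_smul_right]
      simp only [RCLike.star_def, starRingEnd_apply, star_trivial]
      ring
    rw [this, ← hBsymm] at h0
    nlinarith
  have hdisc := discrim_le_zero hq
  rw [discrim] at hdisc
  have hsq : ⟪g x, y⟫ ^ 2 ≤ ⟪g x, x⟫ * ⟪g y, y⟫ := by nlinarith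
  calc ⟪g x, y⟫ ≤ |⟪g x, y⟫| := le_abs_self _
    _ = Real.sqrt (⟪g x, y⟫ ^ 2) := (Real.sqrt_sq_eq_abs _).symm
    _ ≤ Real.sqrt (⟪g x, x⟫ * ⟪g y, y⟫) := Real.sqrt_le_sqrt hsq
    _ = Real.sqrt ⟪g x, x⟫ * Real.sqrt ⟪g y, y⟫ := Real.sqrt_mul (hpos x) _

end Aux

/-- Geometric sum bound. -/
lemma scs_geom_le (s : ℝ) (h0 : 0 ≤ s) (h1 : s < 1) (n : ℕ) :
    ∑ j ∈ range n, s ^ j ≤ 1 / (1 - s) := by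
  have hs : 0 < 1 - s := by linarith
  rw [le_div_iff₀ hs]
  have h := geom_sum_mul s n
  nlinarith [pow_nonneg h0 n]

/-- Triangle sum swap. -/
lemma scs_tri_swap (N : ℕ) (f : ℕ → ℕ → ℝ) :
    ∑ m ∈ range N, ∑ k ∈ range (m + 1), f m k
      = ∑ k ∈ range N, ∑ m ∈ Ico k N, f m k := by
  induction N with
  | zero => simp
  | succ N ih =>
      rw [Finset.sum_range_succ, ih]
      have hsplit : ∀ k ∈ range (N + 1),
          ∑ m ∈ Ico k (N + 1), f m k = ∑ m ∈ Ico k N, f m k + f N k := by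
        intro k hk
        have hk' : k ≤ N := by simpa [Nat.lt_succ_iff] using hk
        exact Finset.sum_Ico_succ_top hk' _
      rw [Finset.sum_congr rfl hsplit, Finset.sum_add_distrib,
        Finset.sum_range_succ (fun k => ∑ m ∈ Ico k N, f m k)]
      simp

/-- The key double-sum bound with geometric decay. -/
lemma scs_tri_bound (N : ℕ) (s : ℝ) (h0 : 0 ≤ s) (h1 : s < 1) (a : ℕ → ℝ)
    (ha : ∀ k, 0 ≤ a k) :
    ∑ m ∈ range N, ∑ k ∈ range (m + 1), ∑ l ∈ range (m + 1),
        s ^ (m - k) * s ^ (m - l) * (a k * a l)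
      ≤ (1 / (1 - s)) ^ 2 * ∑ k ∈ range N, a k ^ 2 := by
  have hs : 0 < 1 - s := by linarith
  have hinv : 0 ≤ 1 / (1 - s) := by positivity
  -- Step 1: AM-GM on a k * a l, then symmetrize
  have step1 : ∀ m, ∑ k ∈ range (m + 1), ∑ l ∈ range (m + 1),
      s ^ (m - k) * s ^ (m - l) * (a k * a l)
      ≤ ∑ k ∈ range (m + 1), ∑ l ∈ range (m + 1),
        s ^ (m - k) * s ^ (m - l) * a k ^ 2 := by
    intro m
    have hAB : ∑ k ∈ range (m + 1), ∑ l ∈ range (m + 1),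
        s ^ (m - k) * s ^ (m - l) * a k ^ 2
        = ∑ k ∈ range (m + 1), ∑ l ∈ range (m + 1),
          s ^ (m - k) * s ^ (m - l) * a l ^ 2 := by
      rw [Finset.sum_comm]
      apply Finset.sum_congr rfl; intro l _
      apply Finset.sum_congr rfl; intro k _
      ring
    have hterm : ∑ k ∈ range (m + 1), ∑ l ∈ range (m + 1),
        s ^ (m - k) * s ^ (m - l) * (a k * a l)
        ≤ ∑ k ∈ range (m + 1), ∑ l ∈ range (m + 1),
          s ^ (m - k) * s ^ (m - l) * ((a k ^ 2 + a l ^ 2) / 2) := by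
      apply Finset.sum_le_sum; intro k _
      apply Finset.sum_le_sum; intro l _
      have hfac : (0 : ℝ) ≤ s ^ (m - k) * s ^ (m - l) :=
        mul_nonneg (pow_nonneg h0 _) (pow_nonneg h0 _)
      have : a k * a l ≤ (a k ^ 2 + a l ^ 2) / 2 := by nlinarith [sq_nonneg (a k - a l)]
      exact mul_le_mul_of_nonneg_left this hfac
    calc ∑ k ∈ range (m + 1), ∑ l ∈ range (m + 1),
          s ^ (m - k) * s ^ (m - l) * (a k * a l)
        ≤ ∑ k ∈ range (m + 1), ∑ l ∈ range (m + 1),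
          s ^ (m - k) * s ^ (m - l) * ((a k ^ 2 + a l ^ 2) / 2) := hterm
      _ = ∑ k ∈ range (m + 1), ∑ l ∈ range (m + 1),
          (s ^ (m - k) * s ^ (m - l) * a k ^ 2
            + s ^ (m - k) * s ^ (m - l) * a l ^ 2) / 2 := by
          apply Finset.sum_congr rfl; intro k _
          apply Finset.sum_congr rfl; intro l _
          ring
      _ = (∑ k ∈ range (m + 1), ∑ l ∈ range (m + 1),
            s ^ (m - k) * s ^ (m - l) * a k ^ 2) / 2
          + (∑ k ∈ range (m + 1), ∑ l ∈ range (m + 1),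
            s ^ (m - k) * s ^ (m - l) * a l ^ 2) / 2 := by
          simp only [add_div, Finset.sum_add_distrib, ← Finset.sum_div]
      _ = ∑ k ∈ range (m + 1), ∑ l ∈ range (m + 1),
            s ^ (m - k) * s ^ (m - l) * a k ^ 2 := by rw [← hAB]; ring
  -- Step 2: the inner geometric sum
  have step2 : ∀ m, ∑ k ∈ range (m + 1), ∑ l ∈ range (m + 1),
      s ^ (m - k) * s ^ (m - l) * a k ^ 2
      ≤ (1 / (1 - s)) * ∑ k ∈ range (m + 1), s ^ (m - k) * a k ^ 2 := by
    intro m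
    have hgeom : ∑ l ∈ range (m + 1), s ^ (m - l) ≤ 1 / (1 - s) := by
      have hrefl : ∑ l ∈ range (m + 1), s ^ (m - l)
          = ∑ j ∈ range (m + 1), s ^ j := by
        have := Finset.sum_range_reflect (fun j => s ^ j) (m + 1)
        simpa using this
      rw [hrefl]; exact scs_geom_le s h0 h1 (m + 1)
    calc ∑ k ∈ range (m + 1), ∑ l ∈ range (m + 1),
          s ^ (m - k) * s ^ (m - l) * a k ^ 2
        = ∑ k ∈ range (m + 1),
          (s ^ (m - k) * a k ^ 2) * ∑ l ∈ range (m + 1), s ^ (m - l) := by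
          apply Finset.sum_congr rfl; intro k _
          rw [Finset.mul_sum]
          apply Finset.sum_congr rfl; intro l _
          ring
      _ ≤ ∑ k ∈ range (m + 1), (s ^ (m - k) * a k ^ 2) * (1 / (1 - s)) := by
          apply Finset.sum_le_sum; intro k _
          apply mul_le_mul_of_nonneg_left hgeom
          exact mul_nonneg (pow_nonneg h0 _) (sq_nonneg _)
      _ = (1 / (1 - s)) * ∑ k ∈ range (m + 1), s ^ (m - k) * a k ^ 2 := by
          rw [Finset.mul_sum]
          apply Finset.sum_congr rfl; intro k _
          ring
  -- Step 3: swap and another geometric sum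
  have step3 : ∑ m ∈ range N, ∑ k ∈ range (m + 1), s ^ (m - k) * a k ^ 2
      ≤ (1 / (1 - s)) * ∑ k ∈ range N, a k ^ 2 := by
    rw [scs_tri_swap N (fun m k => s ^ (m - k) * a k ^ 2)]
    calc ∑ k ∈ range N, ∑ m ∈ Ico k N, s ^ (m - k) * a k ^ 2
        = ∑ k ∈ range N, a k ^ 2 * ∑ m ∈ Ico k N, s ^ (m - k) := by
          apply Finset.sum_congr rfl; intro k _
          rw [Finset.mul_sum]
          apply Finset.sum_congr rfl; intro m _
          ring
      _ ≤ ∑ k ∈ range N, a k ^ 2 * (1 / (1 - s)) := by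
          apply Finset.sum_le_sum; intro k _
          apply mul_le_mul_of_nonneg_left _ (sq_nonneg _)
          have : ∑ m ∈ Ico k N, s ^ (m - k) = ∑ j ∈ range (N - k), s ^ j := by
            rw [Finset.sum_Ico_eq_sum_range]
            apply Finset.sum_congr rfl; intro j _
            congr 1; omega
          rw [this]; exact scs_geom_le s h0 h1 _
      _ = (1 / (1 - s)) * ∑ k ∈ range N, a k ^ 2 := by
          rw [Finset.mul_sum]; apply Finset.sum_congr rfl; intro k _; ring
  calc ∑ m ∈ range N, ∑ k ∈ range (m + 1), ∑ l ∈ range (m + 1),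
        s ^ (m - k) * s ^ (m - l) * (a k * a l)
      ≤ ∑ m ∈ range N, (1 / (1 - s)) * ∑ k ∈ range (m + 1), s ^ (m - k) * a k ^ 2 := by
        apply Finset.sum_le_sum; intro m _
        exact le_trans (step1 m) (step2 m)
    _ = (1 / (1 - s)) * ∑ m ∈ range N, ∑ k ∈ range (m + 1), s ^ (m - k) * a k ^ 2 := by
        rw [Finset.mul_sum]
    _ ≤ (1 / (1 - s)) * ((1 / (1 - s)) * ∑ k ∈ range N, a k ^ 2) :=
        mul_le_mul_of_nonneg_left step3 hinv
    _ = (1 / (1 - s)) ^ 2 * ∑ k ∈ range N, a k ^ 2 := by ring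

/-- Strengthened Cauchy–Schwarz implies uniform boundedness of levelwise sums:
for nested subspaces `X_0 ⊆ ⋯ ⊆ X_M`, self-adjoint positive semidefinite
operators `G_m` with range in `X_m` satisfying the strengthened Cauchy–Schwarz
inequality `⟨G_m u, w⟩ ≤ C₀ δ^{m−k} ‖u‖ ‖w‖` for `u, w ∈ X_k`, `k ≤ m`, one has
`∑_m ⟨G_m v, v⟩ ≤ (C₀ / (1 − √δ)²) ‖v‖²`. -/
theorem strengthened_cs_sum_bound {V : Type*} [NormedAddCommGroup V]
    [InnerProductSpace ℝ V] [FiniteDimensional ℝ V] (M : ℕ)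
    (X : Fin (M + 1) → Submodule ℝ V)
    (hX : ∀ k m : Fin (M + 1), k ≤ m → X k ≤ X m)
    (G : Fin (M + 1) → V →ₗ[ℝ] V)
    (hGsym : ∀ m, ∀ v w : V, ⟪G m v, w⟫ = ⟪v, G m w⟫)
    (hGpos : ∀ m, ∀ v : V, 0 ≤ ⟪G m v, v⟫)
    (hGrange : ∀ m, ∀ v : V, G m v ∈ X m)
    (δ C₀ : ℝ) (hδ0 : 0 < δ) (hδ1 : δ < 1) (hC₀ : 0 < C₀)
    (hSCS : ∀ k m : Fin (M + 1), k ≤ m → ∀ u w : V, u ∈ X k → w ∈ X k →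
      ⟪G m u, w⟫ ≤ C₀ * δ ^ ((m : ℕ) - (k : ℕ)) * ‖u‖ * ‖w‖) :
    ∀ v : V, ∑ m, ⟪G m v, v⟫ ≤ (C₀ / (1 - Real.sqrt δ) ^ 2) * ‖v‖ ^ 2 := by
  intro v
  set s : ℝ := Real.sqrt δ with hs_def
  have hs0 : 0 < s := Real.sqrt_pos.2 hδ0
  have hssq : s ^ 2 = δ := Real.sq_sqrt hδ0.le
  have hs1 : s < 1 := by nlinarith
  -- ℕ-indexing helpers
  set ι : ℕ → Fin (M + 1) := fun n => ⟨min n M, by omega⟩ with hι_def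
  have hιmono : ∀ {n m : ℕ}, n ≤ m → ι n ≤ ι m := by
    intro n m h
    simp only [hι_def, Fin.mk_le_mk]
    omega
  have hιval : ∀ n : ℕ, n ≤ M → ((ι n : Fin (M + 1)) : ℕ) = n := by
    intro n hn; simp [hι_def]; omega
  have hιeq : ∀ m : Fin (M + 1), ι (m : ℕ) = m := by
    intro m
    apply Fin.ext
    have := m.isLt
    simp [hι_def]; omega
  set K : ℕ → Submodule ℝ V := fun n => X (ι n) with hK_def
  set P : ℕ → V := fun n => (Submodule.orthogonalProjection (K n) v : V) with hP_def
  set q : ℕ → V := fun n => if n = 0 then 0 else P (n - 1) with hq_def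
  set d : ℕ → V := fun k => q (k + 1) - q k with hd_def
  set a : ℕ → ℝ := fun k => ‖d k‖ with ha_def
  have ha0 : ∀ k, 0 ≤ a k := fun k => norm_nonneg _
  have hKmono : ∀ {n m : ℕ}, n ≤ m → K n ≤ K m := fun h => hX _ _ (hιmono h)
  -- telescoping
  have htel : ∀ m : ℕ, ∑ k ∈ range (m + 1), d k = P m := by
    intro m
    have := Finset.sum_range_sub q (m + 1)
    simp only [hd_def] at this ⊢
    rw [this]
    simp [hq_def]
  -- membership
  have hPmem : ∀ n, P n ∈ K n := fun n => Submodule.coe_mem _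
  have hdmem : ∀ k, d k ∈ K k := by
    intro k
    apply Submodule.sub_mem
    · have : q (k + 1) = P k := by simp [hq_def]
      rw [this]; exact hPmem k
    · by_cases hk : k = 0
      · simp [hq_def, hk]
      · have : q k = P (k - 1) := by simp [hq_def, hk]
        rw [this]
        exact hKmono (by omega) (hPmem (k - 1))
  have hdmem' : ∀ {k j : ℕ}, k ≤ j → d k ∈ K j := fun h => hKmono h (hdmem _)
  -- projection identity
  have hproj : ∀ n : ℕ, ∀ w ∈ K n, ⟪P n, w⟫ = ⟪v, w⟫ := by
    intro n w hw
    exact scs_proj_inner (K n) v w hw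
  -- orthogonality of the d's
  have horth : ∀ {k l : ℕ}, k < l → ⟪d k, d l⟫ = 0 := by
    intro k l hkl
    have hl1 : l ≠ 0 := by omega
    have hql : q l = P (l - 1) := by simp [hq_def, hl1]
    have hql1 : q (l + 1) = P l := by simp [hq_def]
    have hdk_mem : d k ∈ K (l - 1) := hdmem' (by omega)
    have h1 : ⟪P l, d k⟫ = ⟪v, d k⟫ := hproj l _ (hKmono (by omega) hdk_mem)
    have h2 : ⟪P (l - 1), d k⟫ = ⟪v, d k⟫ := hproj (l - 1) _ hdk_mem
    have : ⟪d l, d k⟫ = 0 := by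
      simp only [hd_def, hql, hql1, inner_sub_left]
      rw [h1, h2]; ring
    rw [real_inner_comm]; exact this
  -- Pythagoras: sum of squares bounded by ‖v‖²
  have hpyth : ∑ k ∈ range (M + 1), a k ^ 2 ≤ ‖v‖ ^ 2 := by
    have hPM : ‖P M‖ ^ 2 = ∑ k ∈ range (M + 1), a k ^ 2 := by
      rw [← real_inner_self_eq_norm_sq, ← htel M]
      rw [sum_inner]
      apply Finset.sum_congr rfl
      intro k hk
      rw [inner_sum]
      rw [Finset.sum_eq_single_of_mem k hk]
      · rw [real_inner_self_eq_norm_sq]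
      · intro l _ hlk
        rcases lt_or_gt_of_ne hlk with h | h
        · rw [real_inner_comm]; exact horth h
        · exact horth h
    rw [← hPM]
    have h := scs_proj_norm_le (K M) v
    have : ‖P M‖ ≤ ‖v‖ := h
    nlinarith [norm_nonneg (P M), norm_nonneg v]
  -- per-level bound
  have hlevel : ∀ m : ℕ, m ≤ M →
      ⟪G (ι m) v, v⟫ ≤ C₀ * ∑ k ∈ range (m + 1), ∑ l ∈ range (m + 1),
        s ^ (m - k) * s ^ (m - l) * (a k * a l) := by
    intro m hm
    set g : V →ₗ[ℝ] V := G (ι m) with hg_def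
    have hgrange : ∀ u : V, g u ∈ K m := fun u => hGrange (ι m) u
    -- decompose
    have hdecomp : ⟪g v, v⟫ = ∑ k ∈ range (m + 1), ⟪g v, d k⟫ := by
      have h1 : ⟪g v, v⟫ = ⟪g v, P m⟫ := by
        calc ⟪g v, v⟫ = ⟪v, g v⟫ := real_inner_comm _ _
          _ = ⟪P m, g v⟫ := (hproj m (g v) (hgrange v)).symm
          _ = ⟪g v, P m⟫ := real_inner_comm _ _
      rw [h1, ← htel m, inner_sum]
    -- energy Cauchy–Schwarz per term
    have hterm : ∀ k, k ≤ m →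
        ⟪g v, d k⟫ ≤ Real.sqrt ⟪g v, v⟫ * (Real.sqrt C₀ * (s ^ (m - k) * a k)) := by
      intro k hk
      have hcs := scs_psd_cs g (hGsym (ι m)) (hGpos (ι m)) v (d k)
      have hdd : ⟪g (d k), d k⟫ ≤ C₀ * δ ^ (m - k) * a k * a k := by
        have happ := hSCS (ι k) (ι m) (hιmono hk) (d k) (d k) (hdmem k) (hdmem k)
        rwa [hιval m hm, hιval k (le_trans hk hm)] at happ
      have hsqrt_dd : Real.sqrt ⟪g (d k), d k⟫ ≤ Real.sqrt C₀ * (s ^ (m - k) * a k) := by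
        have h1 : Real.sqrt ⟪g (d k), d k⟫ ≤ Real.sqrt (C₀ * δ ^ (m - k) * a k * a k) :=
          Real.sqrt_le_sqrt hdd
        have h2 : C₀ * δ ^ (m - k) * a k * a k
            = (Real.sqrt C₀ * (s ^ (m - k) * a k)) ^ 2 := by
          have hC : Real.sqrt C₀ ^ 2 = C₀ := Real.sq_sqrt hC₀.le
          have hδpow : (s ^ (m - k)) ^ 2 = δ ^ (m - k) := by
            rw [← pow_mul, mul_comm, pow_mul, hssq]
          rw [mul_pow, mul_pow, hC, hδpow]
          ring
        rw [h2, Real.sqrt_sq (by positivity)] at h1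
        exact h1
      calc ⟪g v, d k⟫ ≤ Real.sqrt ⟪g v, v⟫ * Real.sqrt ⟪g (d k), d k⟫ := hcs
        _ ≤ Real.sqrt ⟪g v, v⟫ * (Real.sqrt C₀ * (s ^ (m - k) * a k)) := by
            apply mul_le_mul_of_nonneg_left hsqrt_dd (Real.sqrt_nonneg _)
    -- combine
    set T : ℝ := Real.sqrt C₀ * ∑ k ∈ range (m + 1), s ^ (m - k) * a k with hT_def
    have hT0 : 0 ≤ T := by
      apply mul_nonneg (Real.sqrt_nonneg _)
      apply Finset.sum_nonneg; intro k _
      exact mul_nonneg (pow_nonneg hs0.le _) (ha0 k)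
    have hgvT : ⟪g v, v⟫ ≤ Real.sqrt ⟪g v, v⟫ * T := by
      calc ⟪g v, v⟫ = ∑ k ∈ range (m + 1), ⟪g v, d k⟫ := hdecomp
        _ ≤ ∑ k ∈ range (m + 1),
            Real.sqrt ⟪g v, v⟫ * (Real.sqrt C₀ * (s ^ (m - k) * a k)) := by
            apply Finset.sum_le_sum; intro k hk
            exact hterm k (by simp [Nat.lt_succ_iff] at hk; omega)
        _ = Real.sqrt ⟪g v, v⟫ * T := by
            rw [hT_def, Finset.mul_sum, Finset.mul_sum]
    have hgv2 : ⟪g v, v⟫ ≤ T ^ 2 := by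
      have hx0 : 0 ≤ ⟪g v, v⟫ := hGpos (ι m) v
      have hsq : Real.sqrt ⟪g v, v⟫ ^ 2 = ⟪g v, v⟫ := Real.sq_sqrt hx0
      nlinarith [Real.sqrt_nonneg (⟪g v, v⟫), sq_nonneg (Real.sqrt ⟪g v, v⟫ - T)]
    have hT2 : T ^ 2 = C₀ * ∑ k ∈ range (m + 1), ∑ l ∈ range (m + 1),
        s ^ (m - k) * s ^ (m - l) * (a k * a l) := by
      have hC : Real.sqrt C₀ ^ 2 = C₀ := Real.sq_sqrt hC₀.le
      rw [hT_def, mul_pow, hC, sq, Finset.sum_mul_sum]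
      congr 1
      apply Finset.sum_congr rfl; intro k _
      apply Finset.sum_congr rfl; intro l _
      ring
    rw [← hT2]; exact hgv2
  -- assemble
  have hsum : ∑ m : Fin (M + 1), ⟪G m v, v⟫
      = ∑ m ∈ range (M + 1), ⟪G (ι m) v, v⟫ := by
    rw [← Fin.sum_univ_eq_sum_range (fun n => ⟪G (ι n) v, v⟫) (M + 1)]
    apply Finset.sum_congr rfl
    intro m _
    rw [hιeq m]
  rw [hsum]
  have h1s : 0 < 1 - s := by linarith
  calc ∑ m ∈ range (M + 1), ⟪G (ι m) v, v⟫
      ≤ ∑ m ∈ range (M + 1), C₀ * ∑ k ∈ range (m + 1), ∑ l ∈ range (m + 1),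
          s ^ (m - k) * s ^ (m - l) * (a k * a l) := by
        apply Finset.sum_le_sum; intro m hm
        exact hlevel m (by simp [Nat.lt_succ_iff] at hm; omega)
    _ = C₀ * ∑ m ∈ range (M + 1), ∑ k ∈ range (m + 1), ∑ l ∈ range (m + 1),
          s ^ (m - k) * s ^ (m - l) * (a k * a l) := by rw [Finset.mul_sum]
    _ ≤ C₀ * ((1 / (1 - s)) ^ 2 * ∑ k ∈ range (M + 1), a k ^ 2) := by
        apply mul_le_mul_of_nonneg_left _ hC₀.le
        exact scs_tri_bound (M + 1) s hs0.le hs1 a ha0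
    _ ≤ C₀ * ((1 / (1 - s)) ^ 2 * ‖v‖ ^ 2) := by
        apply mul_le_mul_of_nonneg_left _ hC₀.le
        apply mul_le_mul_of_nonneg_left hpyth (by positivity)
    _ = (C₀ / (1 - s) ^ 2) * ‖v‖ ^ 2 := by
        field_simp
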